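/- Let Q be a symmetric n×n real matrix, d ∈ ℝⁿ, A ∈ ℝ^{m×n}, b ∈ ℝᵐ. Suppose x̄ ∈ F is a nondegenerate KKT point of the QP: there exists λ̄ ∈ ℝᵐ with λ̄ ≥ 0, Qx̄ + d = −Aᵀλ̄, (Ax̄ − b)ᵀλ̄ = 0, and rank(A_{I_{x̄}}) = rank(A_{J_λ̄}) = |J_λ̄|. If moreover pᵀQp > 0 for every nonzero p ∈ ℝⁿ with a_iᵀp = 0 for all i ∈ I_{x̄}, then x̄ is a locally unique solution of the QP, i.e. there exists ε > 0 such that Φ(x̄) < Φ(x) for all x ∈ F with ‖x − x̄‖ < ε and x ≠ x̄. -/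
import Mathlib


open Matrix

/-- The objective `Φ(x) = xᵀQx + 2dᵀx`. -/
noncomputable def Phi {n : ℕ} (Q : Matrix (Fin n) (Fin n) ℝ) (d : Fin n → ℝ)
    (x : Fin n → ℝ) : ℝ :=
  x ⬝ᵥ (Q *ᵥ x) + 2 * (d ⬝ᵥ x)

/-- Span argument: if the span of the active rows has dimension `|J|` and the rows in `J`
are linearly independent (with `J ⊆ I`), then any vector orthogonal to all rows in `J`
is orthogonal to all active rows. -/
lemma active_rows_zero {n m : ℕ} (A : Matrix (Fin m) (Fin n) ℝ)
    (I J : Set (Fin m)) (hJI : J ⊆ I)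
    (hrankI : Module.finrank ℝ (Submodule.span ℝ ((fun i => A i) '' I)) = J.ncard)
    (hrankJ : LinearIndependent ℝ (fun i : J => A i))
    (p : Fin n → ℝ) (hp : ∀ i ∈ J, A i ⬝ᵥ p = 0) :
    ∀ i ∈ I, A i ⬝ᵥ p = 0 := by
  classical
  haveI : Fintype J := Fintype.ofFinite _
  have himg : (fun i => A i) '' J = Set.range (fun i : J => A i) :=
    Set.image_eq_range _ _
  have hJcard : Module.finrank ℝ (Submodule.span ℝ ((fun i => A i) '' J)) = J.ncard := by
    rw [himg, finrank_span_eq_card hrankJ, ← Nat.card_coe_set_eq,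
      Nat.card_eq_fintype_card]
  have hle : Submodule.span ℝ ((fun i => A i) '' J) ≤
      Submodule.span ℝ ((fun i => A i) '' I) :=
    Submodule.span_mono (Set.image_mono hJI)
  have hEq : Submodule.span ℝ ((fun i => A i) '' J) =
      Submodule.span ℝ ((fun i => A i) '' I) :=
    Submodule.eq_of_le_of_finrank_le hle (by rw [hrankI, hJcard])
  have hspan : ∀ v ∈ Submodule.span ℝ ((fun i => A i) '' J), v ⬝ᵥ p = 0 := by
    intro v hv
    induction hv using Submodule.span_induction with
    | mem v hv =>
      obtain ⟨i, hi, rfl⟩ := hv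
      exact hp i hi
    | zero => simp
    | add v w _ _ hv hw => rw [add_dotProduct, hv, hw, add_zero]
    | smul c v _ hv => rw [smul_dotProduct, hv, smul_zero]
  intro i hi
  exact hspan _ (hEq ▸ Submodule.subset_span (Set.mem_image_of_mem _ hi))

/-- Remark `rem:KKT2ndlocal`. A nondegenerate KKT point `x̄`
(`rank(A_{I_x̄}) = rank(A_{J_λ̄}) = |J_λ̄|`, encoded by: the rows of `A` indexed by
`J_λ̄` are linearly independent and the span of the rows indexed by `I_x̄` has
dimension `|J_λ̄|`) at which `Q` is positive definite on the null space of the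
active constraints is a locally unique solution of the QP. -/
theorem nondegenerate_second_order_kkt_is_locally_unique {n m : ℕ}
    (Q : Matrix (Fin n) (Fin n) ℝ) (hQ : Q.IsSymm)
    (d : Fin n → ℝ) (A : Matrix (Fin m) (Fin n) ℝ) (b : Fin m → ℝ)
    (xbar : Fin n → ℝ) (hfeas : A *ᵥ xbar ≤ b)
    (lam : Fin m → ℝ) (hlam : 0 ≤ lam)
    (hstat : Q *ᵥ xbar + d = -(Aᵀ *ᵥ lam))
    (hcs : (A *ᵥ xbar - b) ⬝ᵥ lam = 0)
    (hrankI : Module.finrank ℝ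
        (Submodule.span ℝ ((fun i => A i) '' {i : Fin m | (A *ᵥ xbar) i = b i})) =
      {i : Fin m | 0 < lam i}.ncard)
    (hrankJ : LinearIndependent ℝ (fun i : {i : Fin m | 0 < lam i} => A i))
    (hpd : ∀ p : Fin n → ℝ, p ≠ 0 →
      (∀ i : Fin m, (A *ᵥ xbar) i = b i → (A *ᵥ p) i = 0) → 0 < p ⬝ᵥ (Q *ᵥ p)) :
    ∃ ε : ℝ, 0 < ε ∧ ∀ x : Fin n → ℝ, A *ᵥ x ≤ b → ‖x - xbar‖ < ε → x ≠ xbar →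
      Phi Q d xbar < Phi Q d x := by
  classical
  -- complementary slackness, coordinatewise
  have hcs' : ∀ i, 0 < lam i → (A *ᵥ xbar) i = b i := by
    intro i hi
    have h0 : ∀ j ∈ Finset.univ, (0:ℝ) ≤ (b j - (A *ᵥ xbar) j) * lam j := by
      intro j _
      exact mul_nonneg (sub_nonneg.2 (hfeas j)) (hlam j)
    have hsum : ∑ j, (b j - (A *ᵥ xbar) j) * lam j = 0 := by
      have h : ∑ j, (b j - (A *ᵥ xbar) j) * lam j = -((A *ᵥ xbar - b) ⬝ᵥ lam) := by
        simp [dotProduct, Pi.sub_apply, ← Finset.sum_neg_distrib]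
        exact Finset.sum_congr rfl fun j _ => by ring
      rw [h, hcs, neg_zero]
    have hz := (Finset.sum_eq_zero_iff_of_nonneg h0).1 hsum i (Finset.mem_univ i)
    rcases mul_eq_zero.1 hz with h | h
    · linarith
    · exact absurd h (ne_of_gt hi)
  -- the shorthand functions
  set α : (Fin n → ℝ) → ℝ := fun p => p ⬝ᵥ (Q *ᵥ p) with hαdef
  set β : (Fin n → ℝ) → ℝ := fun p => -2 * ((A *ᵥ p) ⬝ᵥ lam) with hβdef
  -- the Taylor identity
  have hPhi : ∀ p : Fin n → ℝ, Phi Q d (xbar + p) = Phi Q d xbar + (α p + β p) := by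
    intro p
    have hsym : xbar ⬝ᵥ (Q *ᵥ p) = p ⬝ᵥ (Q *ᵥ xbar) := by
      have h1 : xbar ᵥ* Q = Qᵀ *ᵥ xbar := (Matrix.mulVec_transpose Q xbar).symm
      rw [hQ] at h1
      rw [Matrix.dotProduct_mulVec, h1, dotProduct_comm]
    have hstat' : p ⬝ᵥ (Q *ᵥ xbar) + p ⬝ᵥ d = -((A *ᵥ p) ⬝ᵥ lam) := by
      have := congrArg (fun v => p ⬝ᵥ v) hstat
      simpa [dotProduct_add, dotProduct_neg, Matrix.dotProduct_mulVec,
        Matrix.vecMul_transpose] using this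
    have hdp : d ⬝ᵥ p = p ⬝ᵥ d := dotProduct_comm _ _
    simp only [Phi, hαdef, hβdef, Matrix.mulVec_add, dotProduct_add,
      add_dotProduct]
    linarith [hsym, hstat', hdp]
  -- cone membership of feasible differences
  have hcone : ∀ x : Fin n → ℝ, A *ᵥ x ≤ b →
      ∀ i, (A *ᵥ xbar) i = b i → (A *ᵥ (x - xbar)) i ≤ 0 := by
    intro x hx i hi
    have : (A *ᵥ (x - xbar)) i = (A *ᵥ x) i - (A *ᵥ xbar) i := by
      rw [Matrix.mulVec_sub]; rfl
    rw [this, hi]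
    linarith [hx i]
  -- nonnegativity of β on the cone
  have hβnn : ∀ p : Fin n → ℝ, (∀ i, (A *ᵥ xbar) i = b i → (A *ᵥ p) i ≤ 0) →
      0 ≤ β p := by
    intro p hp
    have hsum : (A *ᵥ p) ⬝ᵥ lam ≤ 0 := by
      apply Finset.sum_nonpos
      intro i _
      rcases (hlam i).lt_or_eq with h | h
      · exact mul_nonpos_of_nonpos_of_nonneg (hp i (hcs' i h)) (hlam i)
      · simp [← h]
    simp only [hβdef]
    linarith
  -- β = 0 on the cone forces orthogonality to all active rows
  have hβzero : ∀ p : Fin n → ℝ, (∀ i, (A *ᵥ xbar) i = b i → (A *ᵥ p) i ≤ 0) →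
      β p = 0 → ∀ i, (A *ᵥ xbar) i = b i → (A *ᵥ p) i = 0 := by
    intro p hp hβ0
    have hterm : ∀ i ∈ Finset.univ, (0:ℝ) ≤ -((A *ᵥ p) i * lam i) := by
      intro i _
      rcases (hlam i).lt_or_eq with h | h
      · have := mul_nonpos_of_nonpos_of_nonneg (hp i (hcs' i h)) (hlam i)
        linarith
      · simp [← h]
    have hsum0 : ∑ i, -((A *ᵥ p) i * lam i) = 0 := by
      have h : ∑ i, -((A *ᵥ p) i * lam i) = -((A *ᵥ p) ⬝ᵥ lam) := by
        simp [dotProduct, Finset.sum_neg_distrib]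
      simp only [hβdef] at hβ0
      rw [h]; linarith
    have hJz : ∀ i, 0 < lam i → (A *ᵥ p) i = 0 := by
      intro i hi
      have hz := (Finset.sum_eq_zero_iff_of_nonneg hterm).1 hsum0 i (Finset.mem_univ i)
      have : (A *ᵥ p) i * lam i = 0 := by linarith
      rcases mul_eq_zero.1 this with h | h
      · exact h
      · exact absurd h (ne_of_gt hi)
    exact active_rows_zero A {i | (A *ᵥ xbar) i = b i} {i | 0 < lam i}
      (fun i hi => hcs' i hi) hrankI hrankJ p (fun i hi => hJz i hi)
  -- the compact slice of the cone
  set C : Set (Fin n → ℝ) :=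
    ⋂ i, {p : Fin n → ℝ | (A *ᵥ xbar) i = b i → (A *ᵥ p) i ≤ 0} with hCdef
  have hCmem : ∀ p : Fin n → ℝ, p ∈ C ↔
      ∀ i, (A *ᵥ xbar) i = b i → (A *ᵥ p) i ≤ 0 := by
    intro p; simp [hCdef]
  have hCclosed : IsClosed C := by
    apply isClosed_iInter
    intro i
    by_cases h : (A *ᵥ xbar) i = b i
    · have : {p : Fin n → ℝ | (A *ᵥ xbar) i = b i → (A *ᵥ p) i ≤ 0} =
          {p : Fin n → ℝ | (A *ᵥ p) i ≤ 0} := by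
        ext p; simp [h]
      rw [this]
      apply isClosed_le _ continuous_const
      simp only [Matrix.mulVec, dotProduct]
      fun_prop
    · have : {p : Fin n → ℝ | (A *ᵥ xbar) i = b i → (A *ᵥ p) i ≤ 0} = Set.univ := by
        ext p; simp [h]
      rw [this]; exact isClosed_univ
  set S : Set (Fin n → ℝ) := Metric.sphere 0 1 ∩ C with hSdef
  have hScompact : IsCompact S := (isCompact_sphere 0 1).inter_right hCclosed
  have hαcont : Continuous α := by
    simp only [hαdef, dotProduct, Matrix.mulVec]; fun_prop
  have hβcont : Continuous β := by
    simp only [hβdef, dotProduct, Matrix.mulVec]; fun_prop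
  -- positivity of max (α p) (β p) on S
  have hgpos : ∀ p ∈ S, 0 < max (α p) (β p) := by
    rintro p ⟨hps, hpc⟩
    have hpcone := (hCmem p).1 hpc
    have hpne : p ≠ 0 := by
      intro h
      rw [mem_sphere_zero_iff_norm, h, norm_zero] at hps
      exact one_ne_zero hps.symm
    rcases lt_or_eq_of_le (hβnn p hpcone) with h | h
    · exact lt_max_of_lt_right h
    · have := hpd p hpne (hβzero p hpcone h.symm)
      exact lt_max_of_lt_left this
  -- obtain the uniform constants
  have hconsts : ∃ c Mc : ℝ, 0 < c ∧ 1 ≤ Mc ∧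
      ∀ p ∈ S, c ≤ max (α p) (β p) ∧ |α p| ≤ Mc := by
    by_cases hS : S.Nonempty
    · obtain ⟨p₀, hp₀, hmin⟩ := hScompact.exists_isMinOn hS
        ((hαcont.max hβcont).continuousOn)
      obtain ⟨M, hM⟩ := hScompact.exists_bound_of_continuousOn hαcont.continuousOn
      refine ⟨max (α p₀) (β p₀), max M 1, hgpos p₀ hp₀, le_max_right _ _, ?_⟩
      intro p hp
      refine ⟨hmin hp, ?_⟩
      calc |α p| = ‖α p‖ := (Real.norm_eq_abs _).symm
        _ ≤ M := hM p hp
        _ ≤ max M 1 := le_max_left _ _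
    · exact ⟨1, 1, one_pos, le_refl 1, fun p hp => absurd ⟨p, hp⟩ hS⟩
  obtain ⟨c, Mc, hc, hMc, hSc⟩ := hconsts
  refine ⟨c / Mc, div_pos hc (by linarith), ?_⟩
  intro x hx hnear hne
  set p : Fin n → ℝ := x - xbar with hpdef
  have hpne : p ≠ 0 := sub_ne_zero.2 hne
  set t : ℝ := ‖p‖ with htdef
  have ht : 0 < t := norm_pos_iff.2 hpne
  set u : Fin n → ℝ := t⁻¹ • p with hudef
  have hpu : p = t • u := by
    rw [hudef, smul_smul, mul_inv_cancel₀ (ne_of_gt ht), one_smul]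
  have huS : u ∈ S := by
    constructor
    · rw [mem_sphere_zero_iff_norm, hudef, norm_smul, norm_inv, norm_norm, ← htdef,
        inv_mul_cancel₀ (ne_of_gt ht)]
    · rw [hCmem]
      intro i hi
      have h1 : (A *ᵥ u) i = t⁻¹ * (A *ᵥ p) i := by
        rw [hudef, Matrix.mulVec_smul]; rfl
      rw [h1]
      exact mul_nonpos_of_nonneg_of_nonpos (le_of_lt (inv_pos.2 ht))
        (hcone x hx i hi)
  obtain ⟨hcmax, hαbd⟩ := hSc u huS
  -- scaling identities
  have hαscale : α p = t * (t * α u) := by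
    rw [hpu]
    simp only [hαdef, Matrix.mulVec_smul, smul_dotProduct, dotProduct_smul,
      smul_eq_mul]
  have hβscale : β p = t * β u := by
    rw [hpu]
    simp only [hβdef, Matrix.mulVec_smul, smul_dotProduct, smul_eq_mul]
    ring
  -- conclude
  have hx' : x = xbar + p := by rw [hpdef]; ring_nf
  have hkey : 0 < α p + β p := by
    have hβu : 0 ≤ β u := hβnn u ((hCmem u).1 huS.2)
    have htε : t < c / Mc := hnear
    have hMc0 : (0:ℝ) < Mc := by linarith
    have htMc : t * Mc < c := (lt_div_iff₀ hMc0).1 htε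
    rw [hαscale, hβscale]
    rcases le_max_iff.1 hcmax with h | h
    · -- c ≤ α u
      have hαu : 0 < α u := lt_of_lt_of_le hc h
      have h1 : 0 < t * (t * α u) := by positivity
      have h2 : 0 ≤ t * β u := mul_nonneg ht.le hβu
      linarith
    · -- c ≤ β u
      have h1 : -Mc ≤ α u := neg_le_of_abs_le hαbd
      have e1 : t * c ≤ t * β u := mul_le_mul_of_nonneg_left h ht.le
      have e2 : t * (t * (-Mc)) ≤ t * (t * α u) :=
        mul_le_mul_of_nonneg_left (mul_le_mul_of_nonneg_left h1 ht.le) ht.le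
      have e3 : t * (t * Mc) < t * c := mul_lt_mul_of_pos_left htMc ht
      nlinarith
  rw [hx', hPhi p]
  linarith
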